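/- Let x_k → x₀ in ℝ^N, let p : ℝ^N → ℝ be continuous with p(x₀) > 2, let φ be a C² function, and suppose ∇φ(x₀) ≠ 0 and, for all large k, −(|∇φ(x_k)|^{k−2} Δφ(x_k) + (k−2)|∇φ(x_k)|^{k−4} Δ_∞ φ(x_k)) ≥ 0, where Δ_∞ φ = ⟨D²φ ∇φ, ∇φ⟩ is the infinity Laplacian. Then −Δ_∞ φ(x₀) ≥ 0. -/

import Mathlib

open Filter

noncomputable section

/-- The second derivative bilinear form `D²φ(x)(u,v)`. -/
def secondDeriv {N : ℕ} (φ : EuclideanSpace ℝ (Fin N) → ℝ)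
    (x u v : EuclideanSpace ℝ (Fin N)) : ℝ :=
  fderiv ℝ (fun y => fderiv ℝ φ y v) x u

/-- The Laplacian `Δφ(x) = ∑ᵢ ∂²φ/∂xᵢ²`. -/
def lap {N : ℕ} (φ : EuclideanSpace ℝ (Fin N) → ℝ) (x : EuclideanSpace ℝ (Fin N)) : ℝ :=
  ∑ i : Fin N, secondDeriv φ x (EuclideanSpace.basisFun (Fin N) ℝ i)
    (EuclideanSpace.basisFun (Fin N) ℝ i)

/-- The infinity Laplacian `Δ∞φ(x) = ⟨D²φ(x) ∇φ(x), ∇φ(x)⟩`. -/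
def infLap {N : ℕ} (φ : EuclideanSpace ℝ (Fin N) → ℝ) (x : EuclideanSpace ℝ (Fin N)) : ℝ :=
  secondDeriv φ x (gradient φ x) (gradient φ x)

/-- Passing to the limit in the `k`-Laplacian viscosity inequality yields
`−Δ_∞ φ(x₀) ≥ 0`. -/
theorem stmt_10 {N : ℕ} (x : ℕ → EuclideanSpace ℝ (Fin N)) (x₀ : EuclideanSpace ℝ (Fin N))
    (hx : Tendsto x atTop (nhds x₀))
    (p : EuclideanSpace ℝ (Fin N) → ℝ) (hp : Continuous p) (hp2 : 2 < p x₀)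
    (φ : EuclideanSpace ℝ (Fin N) → ℝ) (hφ : ContDiff ℝ 2 φ)
    (hgrad : gradient φ x₀ ≠ 0)
    (hineq : ∀ᶠ k : ℕ in atTop,
      0 ≤ -(‖gradient φ (x k)‖ ^ ((k : ℝ) - 2) * lap φ (x k) +
        ((k : ℝ) - 2) * ‖gradient φ (x k)‖ ^ ((k : ℝ) - 4) * infLap φ (x k))) :
    0 ≤ -infLap φ x₀ := by
  have hf1 : ContDiff ℝ 1 (fderiv ℝ φ) := hφ.fderiv_right (le_refl 2)
  have hB : Continuous (fderiv ℝ (fderiv ℝ φ)) := hf1.continuous_fderiv one_ne_zero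
  have hd1 : Differentiable ℝ (fderiv ℝ φ) := hf1.differentiable one_ne_zero
  have hsd : ∀ y u v, secondDeriv φ y u v = fderiv ℝ (fderiv ℝ φ) y u v := by
    intro y u v
    unfold secondDeriv
    rw [fderiv_clm_apply (hd1 y) (differentiableAt_const v)]
    simp
  have hg : Continuous (gradient φ) := by
    have : gradient φ = fun y => (InnerProductSpace.toDual ℝ _).symm (fderiv ℝ φ y) := rfl
    rw [this]
    exact (InnerProductSpace.toDual ℝ _).symm.continuous.comp hf1.continuous
  -- continuity of infLap and lap
  have hIc : Continuous (infLap φ) := by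
    have : infLap φ = fun y => fderiv ℝ (fderiv ℝ φ) y (gradient φ y) (gradient φ y) := by
      funext y; exact hsd y _ _
    rw [this]
    exact (hB.clm_apply hg).clm_apply hg
  have hLc : Continuous (lap φ) := by
    have : lap φ = fun y => ∑ i : Fin N,
        fderiv ℝ (fderiv ℝ φ) y (EuclideanSpace.basisFun (Fin N) ℝ i)
          (EuclideanSpace.basisFun (Fin N) ℝ i) := by
      funext y; unfold lap; exact Finset.sum_congr rfl fun i _ => hsd y _ _
    rw [this]
    exact continuous_finset_sum _ fun i _ =>
      (hB.clm_apply continuous_const).clm_apply continuous_const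
  -- sequential limits
  have hgn : Tendsto (fun k => ‖gradient φ (x k)‖) atTop (nhds ‖gradient φ x₀‖) :=
    ((continuous_norm.comp hg).continuousAt.tendsto).comp hx
  have hIt : Tendsto (fun k => infLap φ (x k)) atTop (nhds (infLap φ x₀)) :=
    (hIc.continuousAt.tendsto).comp hx
  have hLt : Tendsto (fun k => lap φ (x k)) atTop (nhds (lap φ x₀)) :=
    (hLc.continuousAt.tendsto).comp hx
  have hpos : ∀ᶠ k in atTop, 0 < ‖gradient φ (x k)‖ :=
    hgn.eventually (eventually_gt_nhds (norm_pos_iff.mpr hgrad))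
  have hk3 : ∀ᶠ k : ℕ in atTop, (0:ℝ) < (k : ℝ) - 2 := by
    filter_upwards [eventually_ge_atTop 3] with k hk
    have : (3:ℝ) ≤ (k:ℝ) := by exact_mod_cast hk
    linarith
  -- the key rearranged inequality
  have key : ∀ᶠ k in atTop, infLap φ (x k) ≤
      -(‖gradient φ (x k)‖ ^ 2 * lap φ (x k)) / ((k : ℝ) - 2) := by
    filter_upwards [hineq, hpos, hk3] with k h hr hc
    set r := ‖gradient φ (x k)‖ with hrdef
    set c := (k : ℝ) - 2 with hcdef
    set A := lap φ (x k)
    set I := infLap φ (x k)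
    have hrw : r ^ ((k:ℝ) - 2) = r ^ ((k:ℝ) - 4) * r ^ 2 := by
      rw [show ((k:ℝ) - 2) = ((k:ℝ) - 4) + ((2:ℕ):ℝ) by push_cast; ring,
        Real.rpow_add hr, Real.rpow_natCast]
    set D := r ^ ((k:ℝ) - 4) with hD
    have hDpos : 0 < D := Real.rpow_pos_of_pos hr _
    have h1 : (c * I) * D ≤ (-(r ^ 2 * A)) * D := by
      rw [hrw] at h; nlinarith [h]
    have h2 : c * I ≤ -(r ^ 2 * A) := le_of_mul_le_mul_right h1 hDpos
    rw [le_div_iff₀ hc]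
    linarith
  -- the right-hand side tends to 0
  have hrhs : Tendsto (fun k : ℕ => -(‖gradient φ (x k)‖ ^ 2 * lap φ (x k)) / ((k : ℝ) - 2))
      atTop (nhds 0) := by
    have hnum : Tendsto (fun k : ℕ => -(‖gradient φ (x k)‖ ^ 2 * lap φ (x k))) atTop
        (nhds (-(‖gradient φ x₀‖ ^ 2 * lap φ x₀))) := ((hgn.pow 2).mul hLt).neg
    have hdent : Tendsto (fun k : ℕ => (k : ℝ) - 2) atTop atTop := by
      have := tendsto_atTop_add_const_right atTop (-2 : ℝ) tendsto_natCast_atTop_atTop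
      exact this.congr fun k => by ring
    have hden : Tendsto (fun k : ℕ => ((k : ℝ) - 2)⁻¹) atTop (nhds 0) :=
      hdent.inv_tendsto_atTop
    have := hnum.mul hden
    rw [mul_zero] at this
    exact this.congr fun k => by rw [div_eq_mul_inv]
  have := le_of_tendsto_of_tendsto hIt hrhs key
  linarith
end
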